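/- arXiv:2603.23382 — 2 statements merged into one kernel-verified Lean document; each statement's English description precedes it below -/
import Mathlib

section
/- Let a,b,c,d be real numbers with c ≠ 0, ad − bc ≠ 0, and Δ = (d−a)² + 4bc > 0, and let M be the Möbius transformation of ℝ ∪ {∞} extending t ↦ (at+b)/(ct+d). (i) If a + d ≠ 0, then M has exactly two fixed points t₀ ≠ t₁ in ℝ ∪ {∞}, and one of them (say t_j) attracts every orbit starting in (ℝ ∪ {∞}) \ {t_{1−j}}: for every t ≠ t_{1−j}, Mⁿ(t) → t_j, while the other fixed point t_{1−j} is repelling. (ii) If a + d = 0, then M is an involution: M(M(t)) = t for all t ∈ ℝ ∪ {∞}. -/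
open OnePoint Filter Topology
noncomputable def mobius (a b c d : ℝ) (p : OnePoint ℝ) : OnePoint ℝ :=
  match p with
  | Option.none => ((a / c : ℝ) : OnePoint ℝ)
  | Option.some t =>
      if c * t + d = 0 then (∞ : OnePoint ℝ)
      else (((a * t + b) / (c * t + d) : ℝ) : OnePoint ℝ)

lemma mobius_infty (a b c d : ℝ) : mobius a b c d ∞ = ((a / c : ℝ) : OnePoint ℝ) := rfl
lemma mobius_coe (a b c d t : ℝ) :
    mobius a b c d (t : OnePoint ℝ) =
      if c * t + d = 0 then (∞ : OnePoint ℝ)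
      else (((a * t + b) / (c * t + d) : ℝ) : OnePoint ℝ) := rfl

lemma mobius_main (a b c d r₀ r₁ : ℝ) (hc : c ≠ 0)
    (h0 : c * r₀ ^ 2 + (d - a) * r₀ - b = 0)
    (h1 : c * r₁ ^ 2 + (d - a) * r₁ - b = 0)
    (hne : r₀ ≠ r₁)
    (hu0 : c * r₀ + d ≠ 0) (hu1 : c * r₁ + d ≠ 0)
    (hlt : (c * r₁ + d) ^ 2 < (c * r₀ + d) ^ 2) :
    (∀ q : OnePoint ℝ, mobius a b c d q = q ↔ (q = (r₀ : OnePoint ℝ) ∨ q = (r₁ : OnePoint ℝ))) ∧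
    (∀ q : OnePoint ℝ, q ≠ (r₁ : OnePoint ℝ) →
      Tendsto (fun n : ℕ => (mobius a b c d)^[n] q) atTop (nhds (r₀ : OnePoint ℝ))) := by
  -- algebraic identities
  have hsum : c * (r₀ + r₁) = a - d := by
    have hne' : r₀ - r₁ ≠ 0 := sub_ne_zero.mpr hne
    have h2 : (c * (r₀ + r₁) - (a - d)) * (r₀ - r₁) = 0 := by linear_combination h0 - h1
    rcases mul_eq_zero.mp h2 with h' | h'
    · linarith [sub_eq_zero.mp h']
    · exact absurd h' hne'
  have hprod : c * (r₀ * r₁) = -b := by linear_combination (-1) * h0 + r₀ * hsum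
  have hfact : ∀ t : ℝ, c * t ^ 2 + (d - a) * t - b = c * (t - r₀) * (t - r₁) := by
    intro t; linear_combination t * hsum - hprod
  have hnum0 : ∀ t : ℝ, a * t + b - r₀ * (c * t + d) = (c * r₁ + d) * (t - r₀) := by
    intro t; linear_combination (-t) * hsum + hprod
  have hnum1 : ∀ t : ℝ, a * t + b - r₁ * (c * t + d) = (c * r₀ + d) * (t - r₁) := by
    intro t; linear_combination (-t) * hsum + hprod
  set M := mobius a b c d with hM
  set Φ := mobius 1 (-r₀) 1 (-r₁) with hΦ
  set l := (c * r₁ + d) / (c * r₀ + d) with hl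
  have habs : |l| < 1 := by
    have h2 : l ^ 2 < 1 := by
      rw [hl, div_pow, div_lt_one (by positivity)]; exact hlt
    nlinarith [sq_abs l, abs_nonneg l]
  -- fixed points
  have hfix : ∀ q : OnePoint ℝ, M q = q ↔ (q = (r₀ : OnePoint ℝ) ∨ q = (r₁ : OnePoint ℝ)) := by
    intro q
    induction q using OnePoint.rec with
    | infty => simp [hM, mobius_infty]
    | coe t =>
      rw [hM, mobius_coe]
      by_cases ht : c * t + d = 0
      · rw [if_pos ht]
        constructor
        · intro h; exact absurd h.symm (OnePoint.coe_ne_infty t)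
        · rintro (h | h) <;> rw [OnePoint.coe_eq_coe] at h <;> subst h
          · exact absurd ht hu0
          · exact absurd ht hu1
      · rw [if_neg ht, OnePoint.coe_eq_coe, OnePoint.coe_eq_coe, OnePoint.coe_eq_coe,
          div_eq_iff ht]
        constructor
        · intro h
          have h2 : c * (t - r₀) * (t - r₁) = 0 := by
            rw [← hfact]; linear_combination -h
          rcases mul_eq_zero.mp h2 with h' | h'
          · rcases mul_eq_zero.mp h' with h'' | h''
            · exact absurd h'' hc
            · exact Or.inl (by linarith [sub_eq_zero.mp h''])
          · exact Or.inr (by linarith [sub_eq_zero.mp h'])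
        · rintro (h | h) <;> subst h
          · linear_combination (-1) * h0
          · linear_combination (-1) * h1
  -- Φ on real points ≠ r₁
  have hPhi_coe : ∀ t : ℝ, t ≠ r₁ → Φ (t : OnePoint ℝ) = (((t - r₀) / (t - r₁) : ℝ) : OnePoint ℝ) := by
    intro t ht
    rw [hΦ, mobius_coe, if_neg (by intro h; apply ht; linarith), OnePoint.coe_eq_coe]
    ring_nf
  have hPhi_r1 : Φ (r₁ : OnePoint ℝ) = ∞ := by
    rw [hΦ, mobius_coe, if_pos (by ring)]
  have hPhi_infty : Φ ∞ = ((1 : ℝ) : OnePoint ℝ) := by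
    rw [hΦ, mobius_infty]; norm_num
  -- conjugacy
  have hconj : ∀ q : OnePoint ℝ, Φ (M q) = OnePoint.map (fun x => l * x) (Φ q) := by
    intro q
    induction q using OnePoint.rec with
    | infty =>
      rw [hPhi_infty, hM, mobius_infty]
      have hne1 : a / c ≠ r₁ := by
        intro h
        apply hu0
        field_simp at h
        linear_combination hsum + h
      rw [hPhi_coe _ hne1]
      have e0 : a / c - r₀ = (c * r₁ + d) / c := by
        field_simp; linear_combination -hsum
      have e1 : a / c - r₁ = (c * r₀ + d) / c := by
        field_simp; linear_combination -hsum
      have key : (a / c - r₀) / (a / c - r₁) = l * 1 := by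
        rw [e0, e1, div_div_div_cancel_right₀ hc, hl, mul_one]
      rw [key]; rfl
    | coe t =>
      by_cases htr : t = r₁
      · rw [show ((t : ℝ) : OnePoint ℝ) = (r₁ : OnePoint ℝ) from by rw [htr],
          (hfix _).mpr (Or.inr rfl), hPhi_r1]
        rfl
      · have ht1 : t - r₁ ≠ 0 := sub_ne_zero.mpr htr
        by_cases ht : c * t + d = 0
        · rw [hM, mobius_coe, if_pos ht, hPhi_infty, hPhi_coe _ htr]
          have key : l * ((t - r₀) / (t - r₁)) = 1 := by
            rw [hl]
            field_simp
            linear_combination (r₁ - r₀) * ht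
          rw [show OnePoint.map (fun x => l * x) ((((t - r₀) / (t - r₁) : ℝ)) : OnePoint ℝ)
              = ((l * ((t - r₀) / (t - r₁)) : ℝ) : OnePoint ℝ) from rfl, key]
        · rw [hM, mobius_coe, if_neg ht]
          have hne1 : (a * t + b) / (c * t + d) ≠ r₁ := by
            intro h
            rw [div_eq_iff ht] at h
            have h2 := hnum1 t
            rw [show a * t + b - r₁ * (c * t + d) = 0 from by linear_combination h] at h2
            rcases mul_eq_zero.mp h2.symm with h' | h'
            · exact hu0 h'
            · exact htr (by linarith [sub_eq_zero.mp h'])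
          rw [hPhi_coe _ hne1, hPhi_coe _ htr]
          have e0 : (a * t + b) / (c * t + d) - r₀ = (c * r₁ + d) * (t - r₀) / (c * t + d) := by
            rw [eq_div_iff ht, sub_mul, div_mul_cancel₀ _ ht]
            linear_combination hnum0 t
          have e1 : (a * t + b) / (c * t + d) - r₁ = (c * r₀ + d) * (t - r₁) / (c * t + d) := by
            rw [eq_div_iff ht, sub_mul, div_mul_cancel₀ _ ht]
            linear_combination hnum1 t
          have key : ((a * t + b) / (c * t + d) - r₀) / ((a * t + b) / (c * t + d) - r₁)
              = l * ((t - r₀) / (t - r₁)) := by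
            rw [e0, e1, div_div_div_cancel_right₀ ht, hl, div_mul_div_comm]
          rw [key]; rfl
  refine ⟨hfix, ?_⟩
  intro q hq
  obtain ⟨s₀, hs₀⟩ : ∃ s : ℝ, Φ q = (s : OnePoint ℝ) := by
    induction q using OnePoint.rec with
    | infty => exact ⟨1, hPhi_infty⟩
    | coe t => exact ⟨_, hPhi_coe t (fun h => hq (by rw [h]))⟩
  have hiter : ∀ n : ℕ, Φ (M^[n] q) = ((l ^ n * s₀ : ℝ) : OnePoint ℝ) := by
    intro n
    induction n with
    | zero => simpa using hs₀
    | succ n ih =>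
      rw [Function.iterate_succ_apply', hconj, ih,
        show (OnePoint.map (fun x => l * x) ((l ^ n * s₀ : ℝ) : OnePoint ℝ))
          = ((l * (l ^ n * s₀) : ℝ) : OnePoint ℝ) from rfl, OnePoint.coe_eq_coe]
      ring
  have hinv : ∀ (p : OnePoint ℝ) (x : ℝ), Φ p = (x : OnePoint ℝ) → x ≠ 1 →
      p = (((r₁ * x - r₀) / (x - 1) : ℝ) : OnePoint ℝ) := by
    intro p x hp hx1
    induction p using OnePoint.rec with
    | infty =>
      rw [hPhi_infty, OnePoint.coe_eq_coe] at hp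
      exact absurd hp.symm hx1
    | coe t =>
      by_cases htr : t = r₁
      · rw [htr, hPhi_r1] at hp
        exact absurd hp (OnePoint.infty_ne_coe x)
      · rw [hPhi_coe _ htr, OnePoint.coe_eq_coe] at hp
        rw [OnePoint.coe_eq_coe, eq_div_iff (sub_ne_zero.mpr hx1), ← hp]
        have ht1 : t - r₁ ≠ 0 := sub_ne_zero.mpr htr
        field_simp
        ring
  have hx : Tendsto (fun n : ℕ => l ^ n * s₀) atTop (nhds 0) := by
    simpa using (tendsto_pow_atTop_nhds_zero_of_abs_lt_one habs).mul_const s₀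
  have hev : ∀ᶠ n in atTop, l ^ n * s₀ ≠ 1 := hx.eventually_ne (by norm_num)
  have hnum : Tendsto (fun n : ℕ => r₁ * (l ^ n * s₀) - r₀) atTop (nhds (r₁ * 0 - r₀)) :=
    (tendsto_const_nhds.mul hx).sub_const r₀
  have hden : Tendsto (fun n : ℕ => (l ^ n * s₀) - 1) atTop (nhds (0 - 1)) := hx.sub_const 1
  have hg := hnum.div hden (by norm_num)
  rw [show (r₁ * 0 - r₀) / ((0 : ℝ) - 1) = r₀ by norm_num] at hg
  have hcoe : Tendsto (fun n : ℕ =>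
      (((r₁ * (l ^ n * s₀) - r₀) / ((l ^ n * s₀) - 1) : ℝ) : OnePoint ℝ)) atTop
      (nhds (r₀ : OnePoint ℝ)) := (OnePoint.continuous_coe.tendsto r₀).comp hg
  refine Tendsto.congr' ?_ hcoe
  filter_upwards [hev] with n hn
  exact (hinv _ _ (hiter n) hn).symm

/-- If `c ≠ 0`, `ad - bc ≠ 0` and `Δ = (d-a)² + 4bc > 0`, then:
(i) if `a + d ≠ 0`, the Möbius map has exactly two fixed points `t₀ ≠ t₁` on `ℝ ∪ {∞}`;
one of them (`t₀`) attracts every orbit starting off `t₁`, while the other one is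
repelling, i.e. it attracts every orbit of the inverse map `t ↦ (dt - b)/(-ct + a)`
starting off `t₀`;
(ii) if `a + d = 0`, then the map is an involution. -/
theorem stmt_2 (a b c d : ℝ) (hc : c ≠ 0) (hdet : a * d - b * c ≠ 0)
    (hΔ : (d - a) ^ 2 + 4 * b * c > 0) :
    ((a + d ≠ 0) →
      ∃ t₀ t₁ : OnePoint ℝ, t₀ ≠ t₁ ∧
        (∀ q : OnePoint ℝ, mobius a b c d q = q ↔ (q = t₀ ∨ q = t₁)) ∧
        (∀ q : OnePoint ℝ, q ≠ t₁ →
          Tendsto (fun n : ℕ => (mobius a b c d)^[n] q) atTop (nhds t₀)) ∧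
        (∀ q : OnePoint ℝ, q ≠ t₀ →
          Tendsto (fun n : ℕ => (mobius d (-b) (-c) a)^[n] q) atTop (nhds t₁))) ∧
    ((a + d = 0) → ∀ q : OnePoint ℝ, mobius a b c d (mobius a b c d q) = q) := by
  constructor
  · intro htr
    set s := Real.sqrt ((d - a) ^ 2 + 4 * b * c) with hsdef
    have hs : s ^ 2 = (d - a) ^ 2 + 4 * b * c := Real.sq_sqrt hΔ.le
    have hspos : 0 < s := Real.sqrt_pos.mpr hΔ
    set σ : ℝ := if 0 < a + d then 1 else -1 with hσdef
    have hσsq : σ ^ 2 = 1 := by rw [hσdef]; split <;> norm_num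
    have hσpos : 0 < σ * (a + d) := by
      rw [hσdef]; split
      · simpa using ‹0 < a + d›
      · have h1 : a + d < 0 := lt_of_le_of_ne (not_lt.mp ‹¬0 < a + d›) htr
        nlinarith
    set r₀ := (a - d + σ * s) / (2 * c) with hr₀
    set r₁ := (a - d - σ * s) / (2 * c) with hr₁
    have hss : (σ * s) ^ 2 = (d - a) ^ 2 + 4 * b * c := by
      rw [mul_pow, hσsq, one_mul, hs]
    have h0 : c * r₀ ^ 2 + (d - a) * r₀ - b = 0 := by
      rw [hr₀]; field_simp; linear_combination hss
    have h1 : c * r₁ ^ 2 + (d - a) * r₁ - b = 0 := by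
      rw [hr₁]; field_simp; linear_combination hss
    have hσs : σ * s ≠ 0 := by
      have : σ ≠ 0 := by intro h; rw [h] at hσsq; norm_num at hσsq
      exact mul_ne_zero this hspos.ne'
    have hne : r₀ ≠ r₁ := by
      rw [hr₀, hr₁]
      intro h
      rw [div_eq_div_iff (by simpa using hc) (by simpa using hc)] at h
      have h4 : (σ * s) * (4 * c) = 0 := by linear_combination h
      rcases mul_eq_zero.mp h4 with h' | h'
      · exact hσs h'
      · exact hc (by linarith)
    have hu0e : c * r₀ + d = (a + d + σ * s) / 2 := by rw [hr₀]; field_simp; ring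
    have hu1e : c * r₁ + d = (a + d - σ * s) / 2 := by rw [hr₁]; field_simp; ring
    have hprod : (c * r₀ + d) * (c * r₁ + d) = a * d - b * c := by
      rw [hu0e, hu1e]
      have : (a + d + σ * s) * (a + d - σ * s) = (a + d) ^ 2 - σ ^ 2 * s ^ 2 := by ring
      field_simp
      nlinarith [hs, hσsq]
    have hu0 : c * r₀ + d ≠ 0 := by
      intro h; rw [h, zero_mul] at hprod; exact hdet hprod.symm
    have hu1 : c * r₁ + d ≠ 0 := by
      intro h; rw [h, mul_zero] at hprod; exact hdet hprod.symm
    have hlt : (c * r₁ + d) ^ 2 < (c * r₀ + d) ^ 2 := by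
      rw [hu0e, hu1e]
      have key : ((a + d + σ * s) / 2) ^ 2 - ((a + d - σ * s) / 2) ^ 2
          = (σ * (a + d)) * s := by ring
      nlinarith [mul_pos hσpos hspos]
    obtain ⟨hfix, htend⟩ := mobius_main a b c d r₀ r₁ hc h0 h1 hne hu0 hu1 hlt
    -- inverse map
    have e0' : -c * r₁ + a = c * r₀ + d := by rw [hr₀, hr₁]; field_simp; ring
    have e1' : -c * r₀ + a = c * r₁ + d := by rw [hr₀, hr₁]; field_simp; ring
    obtain ⟨hfix', htend'⟩ := mobius_main d (-b) (-c) a r₁ r₀ (neg_ne_zero.mpr hc)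
      (by linear_combination -h1) (by linear_combination -h0) (Ne.symm hne)
      (by rw [e0']; exact hu0) (by rw [e1']; exact hu1)
      (by rw [e0', e1']; exact hlt)
    exact ⟨(r₀ : OnePoint ℝ), (r₁ : OnePoint ℝ),
      by simpa [OnePoint.coe_eq_coe] using hne, hfix, htend, htend'⟩
  · intro had q
    induction q using OnePoint.rec with
    | infty =>
      rw [mobius_infty, mobius_coe, if_pos (by field_simp; linarith)]
    | coe t =>
      rw [mobius_coe]
      by_cases ht : c * t + d = 0
      · rw [if_pos ht, mobius_infty, OnePoint.coe_eq_coe]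
        field_simp
        nlinarith [ht, had]
      · rw [if_neg ht, mobius_coe]
        have habc : a ^ 2 + b * c ≠ 0 := by
          intro h; apply hdet; linear_combination a * had - h
        have h2 : c * ((a * t + b) / (c * t + d)) + d = (a ^ 2 + b * c) / (c * t + d) := by
          field_simp
          linear_combination (c * t + d - a) * had
        rw [h2, if_neg (div_ne_zero habc ht), OnePoint.coe_eq_coe,
          div_eq_iff (div_ne_zero habc ht)]
        have ht' : t * c + d ≠ 0 := by rwa [mul_comm] at ht
        field_simp
        linear_combination b * had
end

section
/- Let ε ∈ ℝ and let Φ_{1,ε} be the rational map Φ_{1,ε}(x,y) = ( (−2εx² + (1−ε²)x − 2εy² − 2εy)/D₁(x,y), (−2ε²x² + 2εx − 2ε²y² + (1−ε²)y)/D₁(x,y) ), D₁(x,y) = 4ε²x² + 4ε²y² + 4ε²y + ε² − 4εx + 1. Then Φ_{1,ε} preserves the measure with density ν(x,y) = 1/(1+2y)² with respect to Lebesgue measure: for every (x,y) with D₁(x,y) ≠ 0, 1 + 2y ≠ 0, and the second component of Φ_{1,ε}(x,y) different from −1/2, one has ν(Φ_{1,ε}(x,y)) · |det JΦ_{1,ε}(x,y)|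 = ν(x,y), where JΦ_{1,ε} is the Jacobian matrix of Φ_{1,ε}. -/
/-- Denominator of the Kahan–Hirota–Kimura map `Φ_{1,ε}` of the isochronous
quadratic system `S₁`: `ẋ = -y + x² - y²`, `ẏ = x(1+2y)`. -/
noncomputable def D1 (ε x y : ℝ) : ℝ :=
  4 * ε ^ 2 * x ^ 2 + 4 * ε ^ 2 * y ^ 2 + 4 * ε ^ 2 * y + ε ^ 2 - 4 * ε * x + 1

/-- The Kahan–Hirota–Kimura map `Φ_{1,ε}` of the isochronous quadratic system `S₁`. -/
noncomputable def Phi1 (ε : ℝ) (q : ℝ × ℝ) : ℝ × ℝ :=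
  ((-2 * ε * q.1 ^ 2 + (1 - ε ^ 2) * q.1 - 2 * ε * q.2 ^ 2 - 2 * ε * q.2) / D1 ε q.1 q.2,
   (-2 * ε ^ 2 * q.1 ^ 2 + 2 * ε * q.1 - 2 * ε ^ 2 * q.2 ^ 2 + (1 - ε ^ 2) * q.2) /
      D1 ε q.1 q.2)

/-- The invariant density `ν(x,y) = 1/(1+2y)²`. -/
noncomputable def nu1 (q : ℝ × ℝ) : ℝ := 1 / (1 + 2 * q.2) ^ 2

/-- Determinant of a continuous linear map on `ℝ × ℝ` in terms of its values on the
standard basis. -/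
lemma clm_det_fin_two (L : ℝ × ℝ →L[ℝ] ℝ × ℝ) :
    L.det = (L (1, 0)).1 * (L (0, 1)).2 - (L (0, 1)).1 * (L (1, 0)).2 := by
  have h := LinearMap.det_toMatrix (Module.Basis.finTwoProd ℝ) (L : ℝ × ℝ →ₗ[ℝ] ℝ × ℝ)
  rw [ContinuousLinearMap.det, ← h, Matrix.det_fin_two]
  simp [LinearMap.toMatrix_apply, Module.Basis.coe_finTwoProd_repr]

set_option maxHeartbeats 1600000 in
/-- `Φ_{1,ε}` preserves the measure with density `ν(x,y) = 1/(1+2y)²` with respect to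
the Lebesgue measure: `ν(Φ_{1,ε}(x,y))·|det JΦ_{1,ε}(x,y)| = ν(x,y)` wherever
everything is defined. -/
theorem stmt_12 (ε x y : ℝ) (hD : D1 ε x y ≠ 0) (hy : 1 + 2 * y ≠ 0)
    (h2 : (Phi1 ε (x, y)).2 ≠ -1 / 2) :
    nu1 (Phi1 ε (x, y)) * |(fderiv ℝ (Phi1 ε) (x, y)).det| = nu1 (x, y) := by
  have hfst : HasFDerivAt (fun q : ℝ × ℝ => q.1) (ContinuousLinearMap.fst ℝ ℝ ℝ) (x, y) :=
    hasFDerivAt_fst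
  have hsnd : HasFDerivAt (fun q : ℝ × ℝ => q.2) (ContinuousLinearMap.snd ℝ ℝ ℝ) (x, y) :=
    hasFDerivAt_snd
  -- denominator
  have hDEN := ((((hfst.mul hfst).const_mul (4 * ε ^ 2)).add
      ((hsnd.mul hsnd).const_mul (4 * ε ^ 2))).add (hsnd.const_mul (4 * ε ^ 2))).add
      ((hfst.const_mul (-(4 * ε))).add_const (ε ^ 2 + 1))
  have hDval : 4 * ε ^ 2 * (x * x) + 4 * ε ^ 2 * (y * y) +
      4 * ε ^ 2 * y + (-(4 * ε) * x + (ε ^ 2 + 1)) = D1 ε x y := by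
    simp only [D1]; ring
  have hne : 4 * ε ^ 2 * (x * x) + 4 * ε ^ 2 * (y * y) +
      4 * ε ^ 2 * y + (-(4 * ε) * x + (ε ^ 2 + 1)) ≠ 0 := by
    rw [hDval]; exact hD
  have hInv := (hasFDerivAt_inv hne).comp (x, y) hDEN
  -- numerators
  have hN1 := ((((hfst.mul hfst).const_mul (-2 * ε)).add (hfst.const_mul (1 - ε ^ 2))).add
      ((hsnd.mul hsnd).const_mul (-2 * ε))).add (hsnd.const_mul (-2 * ε))
  have hN2 := ((((hfst.mul hfst).const_mul (-2 * ε ^ 2)).add (hfst.const_mul (2 * ε))).add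
      ((hsnd.mul hsnd).const_mul (-2 * ε ^ 2))).add (hsnd.const_mul (1 - ε ^ 2))
  have heq : Phi1 ε =ᶠ[nhds (x, y)] (fun q : ℝ × ℝ =>
      ((-2 * ε * (q.1 * q.1) + (1 - ε ^ 2) * q.1 + -2 * ε * (q.2 * q.2) + -2 * ε * q.2) *
          (4 * ε ^ 2 * (q.1 * q.1) + 4 * ε ^ 2 * (q.2 * q.2) + 4 * ε ^ 2 * q.2 +
            (-(4 * ε) * q.1 + (ε ^ 2 + 1)))⁻¹,
        (-2 * ε ^ 2 * (q.1 * q.1) + 2 * ε * q.1 + -2 * ε ^ 2 * (q.2 * q.2) + (1 - ε ^ 2) * q.2) *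
          (4 * ε ^ 2 * (q.1 * q.1) + 4 * ε ^ 2 * (q.2 * q.2) + 4 * ε ^ 2 * q.2 +
            (-(4 * ε) * q.1 + (ε ^ 2 + 1)))⁻¹)) :=
    Filter.Eventually.of_forall (fun q => by
      simp only [Phi1, Prod.mk.injEq]
      constructor <;>
      · rw [div_eq_mul_inv]
        exact congrArg₂ (· * ·) (by ring) (congrArg Inv.inv (by simp only [D1]; ring)))
  have hPhi := (HasFDerivAt.prodMk (hN1.mul hInv) (hN2.mul hInv)).congr_of_eventuallyEq heq
  have hd3 : (fderiv ℝ (Phi1 ε) (x, y)).det = (1 + ε ^ 2) ^ 2 / D1 ε x y ^ 2 := by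
    rw [hPhi.fderiv, clm_det_fin_two]
    simp only [ContinuousLinearMap.prod_apply, ContinuousLinearMap.add_apply,
      ContinuousLinearMap.smul_apply, ContinuousLinearMap.coe_comp', Function.comp_apply,
      ContinuousLinearMap.smulRight_apply, ContinuousLinearMap.one_apply,
      ContinuousLinearMap.coe_fst', ContinuousLinearMap.coe_snd', smul_eq_mul,
      ContinuousLinearMap.toSpanSingleton_apply, Pi.add_apply, Pi.mul_apply]
    rw [hDval]
    field_simp [hD]
    simp only [D1]
    ring
  have hY : 1 + 2 * (Phi1 ε (x, y)).2 ≠ 0 := by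
    intro h; apply h2; linarith
  rw [hd3, abs_of_nonneg (by positivity)]
  have hYval : 1 + 2 * (Phi1 ε (x, y)).2 = (1 + ε ^ 2) * (1 + 2 * y) / D1 ε x y := by
    simp only [Phi1]
    rw [eq_div_iff hD, add_mul, mul_assoc, div_mul_cancel₀ _ hD]
    simp only [D1]
    ring
  simp only [nu1, hYval]
  rw [hYval] at hY
  have hε : (1 + ε ^ 2) ≠ 0 := by positivity
  field_simp
end
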